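/- Gini means are monotone in the parameters: if p ≤ p′ and q ≤ q′, then G_{p,q}(a) ≤ G_{p′,q′}(a) for every finite tuple a of positive reals. -/

import Mathlib

open Finset in
/-- The Gini mean `G_{p,q}` of a tuple of positive reals. -/
noncomputable def gini (p q : ℝ) (n : ℕ) (a : Fin n → ℝ) : ℝ :=
  if p = q then
    Real.exp ((∑ i, a i ^ p * Real.log (a i)) / (∑ i, a i ^ p))
  else
    ((∑ i, a i ^ p) / (∑ i, a i ^ q)) ^ (1 / (p - q))

open Finset in
lemma logsumexp_sum_pos {m : ℕ} (c : Fin (m + 1) → ℝ) (t : ℝ) :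
    0 < ∑ i, Real.exp (c i * t) :=
  Finset.sum_pos (fun i _ => Real.exp_pos _) Finset.univ_nonempty

open Finset in
lemma logsumexp_convex {m : ℕ} (c : Fin (m + 1) → ℝ) :
    ConvexOn ℝ Set.univ (fun t => Real.log (∑ i, Real.exp (c i * t))) := by
  refine ⟨convex_univ, fun x _ y _ lam mu hlam hmu hsum => ?_⟩
  rcases hlam.eq_or_lt with rfl | hlam'
  · simp only [zero_add] at hsum
    subst hsum
    simp
  rcases hmu.eq_or_lt with rfl | hmu'
  · simp only [add_zero] at hsum
    subst hsum
    simp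
  have hlam1 : lam < 1 := by linarith
  have hmu1 : mu < 1 := by linarith
  have hpq : Real.HolderConjugate lam⁻¹ mu⁻¹ := by
    rw [Real.holderConjugate_iff]
    constructor
    · exact (one_lt_inv₀ hlam').mpr hlam1
    · rw [inv_inv, inv_inv]; exact hsum
  have H := Real.inner_le_Lp_mul_Lq_of_nonneg (s := Finset.univ)
    (f := fun i => Real.exp (c i * x) ^ lam) (g := fun i => Real.exp (c i * y) ^ mu)
    hpq (fun i _ => Real.rpow_nonneg (Real.exp_pos _).le _)
    (fun i _ => Real.rpow_nonneg (Real.exp_pos _).le _)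
  have hFe : ∀ i : Fin (m + 1), (Real.exp (c i * x) ^ lam) ^ lam⁻¹ = Real.exp (c i * x) :=
    fun i => Real.rpow_rpow_inv (Real.exp_pos _).le (ne_of_gt hlam')
  have hGe : ∀ i : Fin (m + 1), (Real.exp (c i * y) ^ mu) ^ mu⁻¹ = Real.exp (c i * y) :=
    fun i => Real.rpow_rpow_inv (Real.exp_pos _).le (ne_of_gt hmu')
  have hL : ∀ i : Fin (m + 1),
      Real.exp (c i * x) ^ lam * Real.exp (c i * y) ^ mu
        = Real.exp (c i * (lam * x + mu * y)) := by
    intro i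
    rw [← Real.exp_mul, ← Real.exp_mul, ← Real.exp_add]
    ring_nf
  simp only [hFe, hGe, hL, one_div, inv_inv] at H
  have hx0 : 0 < ∑ i, Real.exp (c i * x) := logsumexp_sum_pos c x
  have hy0 : 0 < ∑ i, Real.exp (c i * y) := logsumexp_sum_pos c y
  have hRlog := Real.log_le_log (logsumexp_sum_pos c (lam * x + mu * y)) H
  rw [Real.log_mul (Real.rpow_pos_of_pos hx0 _).ne' (Real.rpow_pos_of_pos hy0 _).ne',
    Real.log_rpow hx0, Real.log_rpow hy0] at hRlog
  simpa [smul_eq_mul] using hRlog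

open Finset in
lemma logsumexp_hasDerivAt {m : ℕ} (c : Fin (m + 1) → ℝ) (t : ℝ) :
    HasDerivAt (fun t => Real.log (∑ i, Real.exp (c i * t)))
      ((∑ i, c i * Real.exp (c i * t)) / (∑ i, Real.exp (c i * t))) t := by
  have h1 : ∀ i : Fin (m + 1),
      HasDerivAt (fun t => Real.exp (c i * t)) (c i * Real.exp (c i * t)) t := by
    intro i
    have := ((hasDerivAt_id t).const_mul (c i)).exp
    simpa [mul_comm] using this
  have h2 : HasDerivAt (fun t => ∑ i, Real.exp (c i * t))
      (∑ i, c i * Real.exp (c i * t)) t :=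
    HasDerivAt.fun_sum (fun i _ => h1 i)
  exact h2.log (logsumexp_sum_pos c t).ne'

open Finset in
theorem stmt_9 (p q p' q' : ℝ) (hp : p ≤ p') (hq : q ≤ q')
    (n : ℕ) (a : Fin (n + 1) → ℝ) (ha : ∀ i, 0 < a i) :
    gini p q (n + 1) a ≤ gini p' q' (n + 1) a := by
  classical
  set c : Fin (n + 1) → ℝ := fun i => Real.log (a i) with hc
  set f : ℝ → ℝ := fun t => Real.log (∑ i, Real.exp (c i * t)) with hfdef
  set d : ℝ → ℝ :=
    fun t => (∑ i, c i * Real.exp (c i * t)) / (∑ i, Real.exp (c i * t)) with hddef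
  have hconv : ConvexOn ℝ Set.univ f := logsumexp_convex c
  have hder : ∀ t, HasDerivAt f (d t) t := fun t => logsumexp_hasDerivAt c t
  have hrpow : ∀ (i : Fin (n + 1)) (t : ℝ), a i ^ t = Real.exp (c i * t) := fun i t =>
    Real.rpow_def_of_pos (ha i) t
  set g : ℝ → ℝ → ℝ := fun x y => if x = y then d x else slope f y x with hgdef
  have hgini : ∀ r s : ℝ, gini r s (n + 1) a = Real.exp (g r s) := by
    intro r s
    unfold gini
    by_cases h : r = s
    · subst h
      simp only [hgdef, eq_self_iff_true, if_true]
      congr 1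
      simp only [hddef]
      congr 1
      · exact Finset.sum_congr rfl fun i _ => by rw [hrpow]; ring
      · exact Finset.sum_congr rfl fun i _ => by rw [hrpow]
    · simp only [hgdef, if_neg h]
      have hSr : (∑ i, a i ^ r) = ∑ i, Real.exp (c i * r) :=
        Finset.sum_congr rfl fun i _ => hrpow i r
      have hSs : (∑ i, a i ^ s) = ∑ i, Real.exp (c i * s) :=
        Finset.sum_congr rfl fun i _ => hrpow i s
      rw [hSr, hSs,
        Real.rpow_def_of_pos (div_pos (logsumexp_sum_pos c r) (logsumexp_sum_pos c s)),
        Real.log_div (logsumexp_sum_pos c r).ne' (logsumexp_sum_pos c s).ne']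
      congr 1
      rw [slope_def_field]
      show (f r - f s) * (1 / (r - s)) = (f r - f s) / (r - s)
      rw [mul_one_div]
  have hmono : ∀ y x x', x ≤ x' → g x y ≤ g x' y := by
    intro y x x' hxx'
    rcases eq_or_lt_of_le hxx' with rfl | hlt
    · exact le_refl _
    by_cases h1 : x = y <;> by_cases h2 : x' = y
    · exact absurd (h1.trans h2.symm) hlt.ne
    · subst h1
      simp only [hgdef, if_pos rfl, if_neg h2]
      exact hconv.le_slope_of_hasDerivAt (Set.mem_univ _) (Set.mem_univ _) hlt (hder x)
    · subst h2
      simp only [hgdef, if_neg h1, if_pos rfl]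
      rw [slope_comm]
      exact hconv.slope_le_of_hasDerivAt (Set.mem_univ _) (Set.mem_univ _) hlt (hder x')
    · simp only [hgdef, if_neg h1, if_neg h2]
      exact hconv.slope_mono (Set.mem_univ y)
        ⟨Set.mem_univ x, fun hx => h1 hx⟩ ⟨Set.mem_univ x', fun hx => h2 hx⟩ hxx'
  have hgsymm : ∀ x y, g x y = g y x := by
    intro x y
    by_cases h : x = y
    · subst h; rfl
    · simp only [hgdef, if_neg h, if_neg (Ne.symm h)]
      exact (slope_comm f y x).symm ▸ slope_comm f y x
  rw [hgini p q, hgini p' q']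
  apply Real.exp_le_exp.mpr
  calc g p q ≤ g p' q := hmono q p p' hp
    _ = g q p' := hgsymm _ _
    _ ≤ g q' p' := hmono p' q q' hq
    _ = g p' q' := hgsymm _ _
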